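/- Let dA, dB ≥ 2 and let c be the 3-cycle (0 1 2) of Fin 3. Set M_neg := W_c^A ⊗ W_{c⁻¹}^B + W_{c⁻¹}^A ⊗ W_c^B, where W^A are permutation operators of local dimension dA and W^B of local dimension dB. Then there exists NO diagonal matrix O, indexed by (Fin 3 → Fin dA) × (Fin 3 → Fin dB) (i.e., diagonal in the tensor-product computational basis), such that Tr[O · (W_π^A ⊗ W_σ^B)] = Tr[M_neg · (W_π^A ⊗ W_σ^B)] for all permutations π, σ of Fin 3. (This is the algebraic core of the paper's no-go Proposition 2: the negativity operator cannot be produced by bi-local random unitaries with computational-basis post-processing.) -/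

import Mathlib

open Matrix Kronecker

noncomputable section

/-- Permutation operator `W_π` of local index `I`: `W_π[b,a] = 1` iff `b = a ∘ π`. -/
def permOp (I : Type*) [DecidableEq I] {t : ℕ} (π : Equiv.Perm (Fin t)) :
    Matrix (Fin t → I) (Fin t → I) ℂ :=
  Matrix.of fun b a => if b = a ∘ ⇑π then 1 else 0

/-- the 3-cycle (0 1 2) of `Fin 3` -/
def c3 : Equiv.Perm (Fin 3) := finRotate 3

lemma permOp_mul {I : Type*} [DecidableEq I] [Fintype I] {t : ℕ} (π ρ : Equiv.Perm (Fin t)) :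
    permOp I π * permOp I ρ = permOp I (ρ * π) := by
  ext b a
  simp only [Matrix.mul_apply, permOp, Matrix.of_apply, mul_ite, mul_one, mul_zero, ite_mul,
    one_mul, zero_mul]
  rw [Finset.sum_ite_eq' Finset.univ (a ∘ ⇑ρ) (fun x => if b = x ∘ ⇑π then (1:ℂ) else 0)]
  simp [Function.comp_assoc, Equiv.Perm.coe_mul]
  exact if_congr Iff.rfl rfl rfl

lemma fix_c3_iff {d : ℕ} (a : Fin 3 → Fin d) : a = a ∘ ⇑c3 ↔ ∃ x, a = fun _ => x := by
  constructor
  · intro h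
    have h0 : a 0 = a 1 := by have := congrFun h 0; simpa [c3] using this
    have h1 : a 1 = a 2 := by have := congrFun h 1; simpa [c3] using this
    refine ⟨a 0, funext fun i => ?_⟩
    fin_cases i <;> simp [h0, h1, h0.trans h1]
  · rintro ⟨x, rfl⟩; rfl

lemma fix_c3_inv_iff {d : ℕ} (a : Fin 3 → Fin d) : a = a ∘ ⇑c3⁻¹ ↔ a = a ∘ ⇑c3 := by
  constructor
  · intro h
    funext i
    have := congrFun h (c3 i)
    simpa using this.symm
  · intro h
    funext i
    have := congrFun h (c3⁻¹ i)
    simpa using this.symm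

lemma trace_permOp_one {d t : ℕ} : (permOp (Fin d) (1 : Equiv.Perm (Fin t))).trace = (d:ℂ)^t := by
  simp [Matrix.trace, Matrix.diag, permOp]

lemma trace_permOp_c3 {d : ℕ} : (permOp (Fin d) c3).trace = (d:ℂ) := by
  simp only [Matrix.trace, Matrix.diag, permOp, Matrix.of_apply]
  rw [Finset.sum_boole]
  congr 1
  have : Finset.univ.filter (fun a : Fin 3 → Fin d => a = a ∘ ⇑c3)
      = Finset.univ.image (fun x : Fin d => (fun _ => x : Fin 3 → Fin d)) := by
    ext a
    simp [fix_c3_iff, eq_comm]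
  rw [this, Finset.card_image_of_injective _ (fun x y h => congrFun h 0)]
  simp

lemma trace_permOp_c3_inv {d : ℕ} : (permOp (Fin d) c3⁻¹).trace = (d:ℂ) := by
  have : permOp (Fin d) c3⁻¹ = permOp (Fin d) c3 ∨ True := Or.inr trivial
  simp only [Matrix.trace, Matrix.diag, permOp, Matrix.of_apply]
  have := @trace_permOp_c3 d
  simp only [Matrix.trace, Matrix.diag, permOp, Matrix.of_apply] at this
  rw [← this]
  exact Finset.sum_congr rfl fun a _ => by rw [if_congr (fix_c3_inv_iff a) rfl rfl]

theorem stmt_8 (dA dB : ℕ) (hA : 2 ≤ dA) (hB : 2 ≤ dB) :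
    ¬ ∃ f : (Fin 3 → Fin dA) × (Fin 3 → Fin dB) → ℂ,
      ∀ π σ : Equiv.Perm (Fin 3),
        (Matrix.diagonal f * (permOp (Fin dA) π ⊗ₖ permOp (Fin dB) σ)).trace =
          ((permOp (Fin dA) c3 ⊗ₖ permOp (Fin dB) c3⁻¹ +
              permOp (Fin dA) c3⁻¹ ⊗ₖ permOp (Fin dB) c3) *
            (permOp (Fin dA) π ⊗ₖ permOp (Fin dB) σ)).trace := by
  rintro ⟨f, h⟩
  have hsq : c3 * c3 = c3⁻¹ := by decide
  have hsq' : c3⁻¹ * c3⁻¹ = c3 := by decide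
  have hid : c3 * c3⁻¹ = 1 := mul_inv_cancel c3
  have hid' : c3⁻¹ * c3 = 1 := inv_mul_cancel c3
  -- LHS of (c3,c3) equals LHS of (c3,c3⁻¹)
  have hL : (Matrix.diagonal f * (permOp (Fin dA) c3 ⊗ₖ permOp (Fin dB) c3)).trace
      = (Matrix.diagonal f * (permOp (Fin dA) c3 ⊗ₖ permOp (Fin dB) c3⁻¹)).trace := by
    simp only [Matrix.trace, Matrix.diag, Matrix.diagonal_mul, Matrix.kroneckerMap_apply,
      permOp, Matrix.of_apply]
    exact Finset.sum_congr rfl fun p _ => by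
      rw [if_congr (Iff.symm (fix_c3_inv_iff p.2)) rfl rfl]
  -- compute RHS of (c3,c3)
  have h1 := h c3 c3
  have h2 := h c3 c3⁻¹
  rw [add_mul, Matrix.trace_add, ← Matrix.mul_kronecker_mul, ← Matrix.mul_kronecker_mul,
    Matrix.trace_kronecker, Matrix.trace_kronecker, permOp_mul, permOp_mul, permOp_mul,
    permOp_mul, hsq, hid, trace_permOp_c3_inv, trace_permOp_one,
    trace_permOp_one, trace_permOp_c3_inv] at h1
  rw [add_mul, Matrix.trace_add, ← Matrix.mul_kronecker_mul, ← Matrix.mul_kronecker_mul,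
    Matrix.trace_kronecker, Matrix.trace_kronecker, permOp_mul, permOp_mul, permOp_mul,
    permOp_mul, hsq, hsq', hid, hid', trace_permOp_c3_inv,
    trace_permOp_c3, trace_permOp_one, trace_permOp_one] at h2
  have key : (dA:ℂ) * (dB:ℂ)^3 + (dA:ℂ)^3 * (dB:ℂ)
      = (dA:ℂ) * (dB:ℂ) + (dA:ℂ)^3 * (dB:ℂ)^3 := by
    rw [← h1, hL, h2]
  have keyN : dA * dB^3 + dA^3 * dB = dA * dB + dA^3 * dB^3 := by
    exact_mod_cast key
  have hA' : (2:ℤ) ≤ (dA:ℤ) := by exact_mod_cast hA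
  have hB' : (2:ℤ) ≤ (dB:ℤ) := by exact_mod_cast hB
  have keyZ : (dA:ℤ) * dB^3 + dA^3 * dB = dA * dB + dA^3 * dB^3 := by exact_mod_cast keyN
  have qA : (dA:ℤ)*4 ≤ dA*dA^2 := mul_le_mul_of_nonneg_left (by nlinarith) (by linarith)
  have qB : (dB:ℤ)*4 ≤ dB*dB^2 := mul_le_mul_of_nonneg_left (by nlinarith) (by linarith)
  have p1 : (0:ℤ) < (dA:ℤ)^3 - dA := by nlinarith
  have p2 : (0:ℤ) < (dB:ℤ)^3 - dB := by nlinarith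
  nlinarith [mul_pos p1 p2]
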